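/- If a sequence (B_m)_{m≥1} of reals ≥ 1 satisfies B_1 = 1 and B_m ≤ Γ(2 − 1/m)^{−m/(2m−2)} · B_{m−1} for all m ≥ 2, then there exists κ > 0 such that B_m ≤ κ · m^{(1−γ)/2} for all m ≥ 1, where γ is the Euler–Mascheroni constant. -/

import Mathlib

open Real

/-- Tangent-line bound from log-convexity of Γ: for `0 < x < 2`,
`log (Γ x) ≥ (1 - γ) * (x - 2)`. -/
lemma logGamma_tangent {x : ℝ} (hx : 0 < x) (hx2 : x < 2) :
    (1 - Real.eulerMascheroniConstant) * (x - 2) ≤ Real.log (Real.Gamma x) := by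
  have hconv : ConvexOn ℝ (Set.Ioi 0) (Real.log ∘ Real.Gamma) := Real.convexOn_log_Gamma
  have hG : HasDerivAt Real.Gamma (1 - Real.eulerMascheroniConstant) 2 := by
    have := Real.hasDerivAt_Gamma_nat 1
    norm_num at this
    convert this using 1 <;> push_cast <;> ring_nf
  have hlogG : HasDerivAt (Real.log ∘ Real.Gamma)
      ((1 - Real.eulerMascheroniConstant) / Real.Gamma 2) 2 := by
    exact hG.log (by rw [Real.Gamma_two]; norm_num)
  rw [Real.Gamma_two, div_one] at hlogG
  have hslope := hconv.slope_le_of_hasDerivAt (Set.mem_Ioi.mpr hx)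
    (Set.mem_Ioi.mpr (by norm_num : (0:ℝ) < 2)) hx2 hlogG
  have h2 : (Real.log ∘ Real.Gamma) 2 = 0 := by
    simp [Function.comp, Real.Gamma_two]
  rw [slope_def_field, h2] at hslope
  have hne : (0:ℝ) < 2 - x := by linarith
  rw [div_le_iff₀ hne] at hslope
  simp only [Function.comp_apply] at hslope
  nlinarith [hslope]

/-- The recursion factor bound: for `m ≥ 2`,
`Γ(2 - 1/m) ^ (-m/(2m-2)) ≤ exp ((1-γ)/(2*(m-1)))`. -/
lemma gamma_factor_bound {m : ℕ} (hm : 2 ≤ m) :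
    Real.Gamma (2 - 1 / (m : ℝ)) ^ (-(m : ℝ) / (2 * m - 2)) ≤
      Real.exp ((1 - Real.eulerMascheroniConstant) / (2 * ((m : ℝ) - 1))) := by
  have hm1 : (1:ℝ) ≤ (m:ℝ) := by exact_mod_cast Nat.one_le_of_lt hm
  have hm2 : (2:ℝ) ≤ (m:ℝ) := by exact_mod_cast hm
  have hmpos : (0:ℝ) < m := by linarith
  have hx : (0:ℝ) < 2 - 1 / (m : ℝ) := by
    have : 1 / (m:ℝ) ≤ 1 := by
      rw [div_le_one hmpos]; linarith
    linarith
  have hx2 : 2 - 1 / (m : ℝ) < 2 := by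
    have : 0 < 1 / (m:ℝ) := by positivity
    linarith
  have hγ : (1 - Real.eulerMascheroniConstant) * ((2 - 1/(m:ℝ)) - 2) ≤
      Real.log (Real.Gamma (2 - 1/(m:ℝ))) := logGamma_tangent hx hx2
  have hGpos : 0 < Real.Gamma (2 - 1/(m:ℝ)) := Real.Gamma_pos_of_pos hx
  have hbase : Real.exp (-((1 - Real.eulerMascheroniConstant) / (m:ℝ))) ≤
      Real.Gamma (2 - 1/(m:ℝ)) := by
    rw [← Real.exp_log hGpos]
    apply Real.exp_le_exp.mpr
    calc -((1 - Real.eulerMascheroniConstant) / (m:ℝ))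
        = (1 - Real.eulerMascheroniConstant) * ((2 - 1/(m:ℝ)) - 2) := by ring
      _ ≤ _ := hγ
  have hz : -(m:ℝ) / (2 * m - 2) ≤ 0 := by
    apply div_nonpos_of_nonpos_of_nonneg <;> linarith
  calc Real.Gamma (2 - 1 / (m : ℝ)) ^ (-(m : ℝ) / (2 * m - 2))
      ≤ (Real.exp (-((1 - Real.eulerMascheroniConstant) / (m:ℝ)))) ^
          (-(m : ℝ) / (2 * m - 2)) :=
        Real.rpow_le_rpow_of_nonpos (Real.exp_pos _) hbase hz
    _ = Real.exp ((1 - Real.eulerMascheroniConstant) / (2 * ((m : ℝ) - 1))) := by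
        rw [← Real.exp_mul]
        congr 1
        have h1 : (2:ℝ) * m - 2 ≠ 0 := by linarith
        have h2 : (2:ℝ) * ((m:ℝ) - 1) ≠ 0 := by
          intro h; apply h1; linarith
        field_simp

/-- Abstract form of Corollary 3.2: the recursive Bohnenblust–Hille bound
implies growth of order `m^{(1-γ)/2}`. -/
theorem multilinear_bh_growth (B : ℕ → ℝ) (hB1 : ∀ m, 1 ≤ m → 1 ≤ B m)
    (hBone : B 1 = 1)
    (hrec : ∀ m : ℕ, 2 ≤ m →
      B m ≤ Real.Gamma (2 - 1 / (m : ℝ)) ^ (-(m : ℝ) / (2 * m - 2)) * B (m - 1)) :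
    ∃ κ : ℝ, 0 < κ ∧ ∀ m : ℕ, 1 ≤ m →
      B m ≤ κ * (m : ℝ) ^ ((1 - Real.eulerMascheroniConstant) / 2) := by
  set c : ℝ := (1 - Real.eulerMascheroniConstant) / 2 with hc
  have hγlt : Real.eulerMascheroniConstant < 1 :=
    lt_trans Real.eulerMascheroniConstant_lt_two_thirds (by norm_num)
  have hcpos : 0 < c := by
    rw [hc]; linarith
  refine ⟨Real.exp c, Real.exp_pos _, ?_⟩
  -- Main inductive bound: B m ≤ exp (c * harmonic (m - 1))
  have key : ∀ m : ℕ, 1 ≤ m → B m ≤ Real.exp (c * (harmonic (m - 1) : ℝ)) := by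
    intro m hm
    induction m, hm using Nat.le_induction with
    | base => simp [hBone, harmonic]
    | succ n hn ih =>
      have hn2 : 2 ≤ n + 1 := by omega
      have h1 := hrec (n + 1) hn2
      have h2 : Real.Gamma (2 - 1 / ((n + 1 : ℕ) : ℝ)) ^
          (-((n + 1 : ℕ) : ℝ) / (2 * ((n + 1 : ℕ) : ℝ) - 2)) ≤
          Real.exp ((1 - Real.eulerMascheroniConstant) / (2 * (((n + 1 : ℕ) : ℝ) - 1))) :=
        gamma_factor_bound hn2
      have hBn : 0 ≤ B ((n + 1) - 1) := by
        have : (n + 1) - 1 = n := by omega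
        rw [this]
        linarith [hB1 n hn]
      calc B (n + 1)
          ≤ Real.Gamma (2 - 1 / ((n + 1 : ℕ) : ℝ)) ^
              (-((n + 1 : ℕ) : ℝ) / (2 * ((n + 1 : ℕ) : ℝ) - 2)) * B ((n + 1) - 1) := h1
        _ ≤ Real.exp ((1 - Real.eulerMascheroniConstant) / (2 * (((n + 1 : ℕ) : ℝ) - 1))) *
              Real.exp (c * (harmonic (n - 1) : ℝ)) := by
            apply mul_le_mul h2 ?_ hBn (Real.exp_pos _).le
            have : (n + 1) - 1 = n := by omega
            rw [this]
            exact ih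
        _ ≤ Real.exp (c * (harmonic ((n + 1) - 1) : ℝ)) := by
            rw [← Real.exp_add]
            apply Real.exp_le_exp.mpr
            have hnn : (n + 1 : ℕ) - 1 = n := by omega
            rw [hnn]
            have hrepr : n = (n - 1) + 1 := by omega
            have hH : (harmonic n : ℝ) = (harmonic (n - 1) : ℝ) + 1 / ((n : ℝ)) := by
              conv_lhs => rw [hrepr, harmonic_succ]
              push_cast [Nat.cast_sub hn]
              ring
            rw [hH]
            have hnpos : (0:ℝ) < (n:ℝ) := by exact_mod_cast hn
            have : ((n + 1 : ℕ) : ℝ) - 1 = (n : ℝ) := by push_cast; ring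
            rw [this, mul_add]
            have heq : (1 - Real.eulerMascheroniConstant) / (2 * (n:ℝ)) = c * (1/(n:ℝ)) := by
              rw [hc]; field_simp
            linarith [heq.le]
  intro m hm
  have hmR : (1:ℝ) ≤ (m:ℝ) := by exact_mod_cast hm
  have hmpos : (0:ℝ) < (m:ℝ) := by linarith
  calc B m ≤ Real.exp (c * (harmonic (m - 1) : ℝ)) := key m hm
    _ ≤ Real.exp (c * (1 + Real.log m)) := by
        apply Real.exp_le_exp.mpr
        apply mul_le_mul_of_nonneg_left ?_ hcpos.le
        calc (harmonic (m - 1) : ℝ) ≤ 1 + Real.log (m - 1 : ℕ) :=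
              harmonic_le_one_add_log (m - 1)
          _ ≤ 1 + Real.log m := by
              apply (add_le_add_iff_left 1).mpr
              rcases Nat.eq_or_lt_of_le hm with h | h
              · simp [← h]
              · have h1 : (1:ℝ) ≤ ((m - 1 : ℕ) : ℝ) := by
                  exact_mod_cast (by omega : 1 ≤ m - 1)
                apply Real.log_le_log (by linarith)
                exact_mod_cast Nat.sub_le m 1
    _ = Real.exp c * (m : ℝ) ^ c := by
        rw [mul_add, mul_one, Real.exp_add]
        congr 1
        rw [Real.rpow_def_of_pos hmpos, mul_comm]
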